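/- Let m ≥ 1 and let B be an m×m matrix over F₂. If the digital net generated by (I, B, B²) is a (0,m,3)-net over F₂, then B³ = I. -/

import Mathlib

open Matrix

/-- The vector of binary digits of `l` (least significant first). -/
def digitsVec (m l : ℕ) : Fin m → ZMod 2 := fun k => if l.testBit k.val then 1 else 0

/-- The map φ sending a bit vector to a real number in [0,1). -/
noncomputable def phiMap (m : ℕ) (y : Fin m → ZMod 2) : ℝ :=
  ∑ k : Fin m, ((y k).val : ℝ) / 2 ^ (k.val + 1)

/-- The digital net (as a multiset of `2^m` points in `[0,1)^s`) generated by
matrices `C 0, …, C (s-1)`. -/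
noncomputable def digitalNet (m s : ℕ) (C : Fin s → Matrix (Fin m) (Fin m) (ZMod 2)) :
    Multiset (Fin s → ℝ) :=
  (Multiset.range (2 ^ m)).map fun l => fun j => phiMap m ((C j).mulVec (digitsVec m l))

open Classical in
/-- `P` is a `(t,m,s)`-net over `F₂`: every elementary interval of volume `2^{t-m}`
contains exactly `2^t` points of `P`, counted with multiplicity. -/
def IsNet (t m s : ℕ) (P : Multiset (Fin s → ℝ)) : Prop :=
  ∀ d : Fin s → ℕ, (∑ i, d i) = m - t →
    ∀ a : Fin s → ℕ, (∀ i, a i < 2 ^ d i) →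
      (P.countP fun x => ∀ i,
        ((a i : ℝ) / 2 ^ d i ≤ x i ∧ x i < ((a i : ℝ) + 1) / 2 ^ d i)) = 2 ^ t

/-- The anti-diagonal matrix `J_m` over `F₂`. -/
def Jmat (m : ℕ) : Matrix (Fin m) (Fin m) (ZMod 2) :=
  Matrix.of fun i j => if i.val + j.val = m - 1 then 1 else 0

/-- The upper-triangular Pascal matrix `P_m` over `F₂` (0-indexed entry `(i,j)` is
`binom(j,i) mod 2`). -/
def Pmat (m : ℕ) : Matrix (Fin m) (Fin m) (ZMod 2) :=
  Matrix.of fun i j => ((j.val.choose i.val : ℕ) : ZMod 2)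

/-- A matrix is lower triangular. -/
def IsLowerTri {m : ℕ} (L : Matrix (Fin m) (Fin m) (ZMod 2)) : Prop :=
  ∀ i j : Fin m, i < j → L i j = 0


def VP (m d : ℕ) (x : Fin m → ZMod 2) : Prop := ∀ i : Fin m, (i : ℕ) < d → x i = 0

lemma zm2_sub {u v : ZMod 2} (hu : u ≠ 0) (hv : v ≠ 0) : u - v = 0 := by revert hu hv; revert u v; decide

lemma zm2_iff (p : ZMod 2) {q : ZMod 2} (hq : q ≠ 0) : p = 0 ↔ ¬ (p - q = 0) := by
  revert hq; revert p q; decide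

section part2
variable {m : ℕ} {B : Matrix (Fin m) (Fin m) (ZMod 2)}
variable (hz : ∀ a b c : ℕ, a + b + c = m → ∀ x : Fin m → ZMod 2,
    VP m a x → VP m b (B *ᵥ x) → VP m c (B *ᵥ (B *ᵥ x)) → x = 0)

lemma VP0 (x : Fin m → ZMod 2) : VP m 0 x := fun i hi => absurd hi (by omega)

lemma VPsucc {d : ℕ} {x : Fin m → ZMod 2} (h : VP m d x) (hd : d < m)
    (h0 : x ⟨d, hd⟩ = 0) : VP m (d+1) x := by
  intro i hi
  by_cases hlt : (i : ℕ) < d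
  · exact h i hlt
  · have : i = ⟨d, hd⟩ := by apply Fin.ext; show (i : ℕ) = d; omega
    rw [this]; exact h0

include hz in
lemma hinj : ∀ x : Fin m → ZMod 2, B *ᵥ x = 0 → x = 0 := by
  intro x h
  exact hz 0 m 0 (by omega) x (VP0 x) (fun i hi => by rw [h]; rfl) (VP0 _)

lemma Sex (a b c : ℕ) (h : a + b + c + 1 = m) :
    ∃ w : Fin m → ZMod 2, w ≠ 0 ∧ VP m a w ∧ VP m b (B *ᵥ w) ∧ VP m c (B *ᵥ (B *ᵥ w)) := by
  have ha : a ≤ m := by omega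
  have hb : b ≤ m := by omega
  have hc : c ≤ m := by omega
  set F : (Fin m → ZMod 2) → ((Fin a → ZMod 2) × (Fin b → ZMod 2) × (Fin c → ZMod 2)) :=
    fun x => (fun i => x (Fin.castLE ha i), fun i => (B *ᵥ x) (Fin.castLE hb i),
      fun i => (B *ᵥ (B *ᵥ x)) (Fin.castLE hc i)) with hF
  have hcard : Fintype.card ((Fin a → ZMod 2) × (Fin b → ZMod 2) × (Fin c → ZMod 2))
      < Fintype.card (Fin m → ZMod 2) := by
    simp only [Fintype.card_prod, Fintype.card_fun, Fintype.card_fin, ZMod.card]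
    rw [← pow_add, ← pow_add]
    exact Nat.pow_lt_pow_right one_lt_two (by omega)
  obtain ⟨x, y, hne, heq⟩ := Fintype.exists_ne_map_eq_of_card_lt F hcard
  refine ⟨x - y, sub_ne_zero_of_ne hne, ?_, ?_, ?_⟩
  · intro i hi
    have := congrFun (congrArg Prod.fst heq) ⟨(i : ℕ), hi⟩
    simp only [hF] at this
    have hcast : Fin.castLE ha ⟨(i : ℕ), hi⟩ = i := rfl
    rw [hcast] at this
    rw [Pi.sub_apply, this, sub_self]
  · intro i hi
    have := congrFun (congrArg (fun p => p.2.1) heq) ⟨(i : ℕ), hi⟩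
    simp only [hF] at this
    have hcast : Fin.castLE hb ⟨(i : ℕ), hi⟩ = i := rfl
    rw [hcast] at this
    rw [mulVec_sub, Pi.sub_apply, this, sub_self]
  · intro i hi
    have := congrFun (congrArg (fun p => p.2.2) heq) ⟨(i : ℕ), hi⟩
    simp only [hF] at this
    have hcast : Fin.castLE hc ⟨(i : ℕ), hi⟩ = i := rfl
    rw [hcast] at this
    rw [mulVec_sub, mulVec_sub, Pi.sub_apply, this, sub_self]

include hz in
lemma flagiff : ∀ c : ℕ, ∀ x : Fin m → ZMod 2,
    VP m c x ↔ VP m c (B *ᵥ (B *ᵥ (B *ᵥ x))) := by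
  intro c
  induction c with
  | zero => intro x; exact iff_of_true (VP0 x) (VP0 _)
  | succ c IH =>
    intro x
    by_cases hcm : c < m
    case neg =>
      -- c ≥ m : VP (c+1) ↔ VP c
      have e1 : ∀ (y : Fin m → ZMod 2), VP m (c+1) y ↔ VP m c y := by
        intro y
        constructor
        · intro h i hi; exact h i (by omega)
        · intro h i _; exact h i (by omega)
      rw [e1, e1]; exact IH x
    case pos =>
      have key : ∀ k : ℕ, ∀ y : Fin m → ZMod 2, VP m c y → VP m (m - k) (B *ᵥ y) →
          (y ⟨c, hcm⟩ = 0 ↔ (B *ᵥ (B *ᵥ (B *ᵥ y))) ⟨c, hcm⟩ = 0) := by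
        intro k
        induction k with
        | zero =>
          intro y _ hTy
          have hT0 : B *ᵥ y = 0 := funext fun i => hTy i (by simpa using i.isLt)
          have hy0 : y = 0 := hinj hz y hT0
          rw [hy0]
          simp [Matrix.mulVec_zero]
        | succ k IHk =>
          intro y hVy hTy
          by_cases hk : k < m
          case neg =>
            apply IHk y hVy
            intro i hi; exact absurd hi (by omega)
          case pos =>
            set a := m - (k+1) with hadef
            have ha : a < m := by omega
            by_cases h0 : (B *ᵥ y) ⟨a, ha⟩ = 0
            · apply IHk y hVy
              have hVa : VP m a (B *ᵥ y) := by
                intro i hi; exact hTy i (by omega)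
              have : m - k = a + 1 := by omega
              rw [this]
              exact VPsucc hVa ha h0
            · have hy0 : y ≠ 0 := by
                intro h; apply h0; rw [h, Matrix.mulVec_zero]; rfl
              have hac : a + c + 1 ≤ m := by
                by_contra hcon
                apply hy0
                refine hz c (m - c) 0 (by omega) y hVy ?_ (VP0 _)
                intro i hi; exact hTy i (by omega)
              set e := m - 1 - c - a with hedef
              obtain ⟨w, hw0, hwc, hwa, hwe⟩ := Sex (B := B) c a e (by omega)
              have hwcoord : w ⟨c, hcm⟩ ≠ 0 := by
                intro h
                exact hw0 (hz (c+1) a e (by omega) w (VPsucc hwc hcm h) hwa hwe)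
              have hTwcoord : (B *ᵥ w) ⟨a, ha⟩ ≠ 0 := by
                intro h
                exact hw0 (hz c (a+1) e (by omega) w hwc (VPsucc hwa ha h) hwe)
              have hT3wc : (B *ᵥ (B *ᵥ (B *ᵥ w))) ⟨c, hcm⟩ ≠ 0 := by
                intro h
                have h1 : VP m c (B *ᵥ (B *ᵥ (B *ᵥ w))) := (IH w).mp hwc
                have h2 : VP m (c+1) (B *ᵥ (B *ᵥ (B *ᵥ w))) := VPsucc h1 hcm h
                have h3 : B *ᵥ w = 0 := hz a e (c+1) (by omega) (B *ᵥ w) hwa hwe h2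
                exact hw0 (hinj hz w h3)
              -- x' = y - w
              have hVy' : VP m c (y - w) := by
                intro i hi; rw [Pi.sub_apply, hVy i hi, hwc i hi, sub_self]
              have hTy' : VP m (m - k) (B *ᵥ (y - w)) := by
                rw [mulVec_sub]
                intro i hi
                by_cases hia : (i : ℕ) < a
                · rw [Pi.sub_apply, hTy i (by omega), hwa i hia, sub_self]
                · have : i = ⟨a, ha⟩ := by apply Fin.ext; show (i : ℕ) = a; omega
                  rw [this]
                  exact zm2_sub h0 hTwcoord
              have IH' := IHk (y - w) hVy' hTy'
              have hsub3 : B *ᵥ (B *ᵥ (B *ᵥ (y - w)))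
                  = B *ᵥ (B *ᵥ (B *ᵥ y)) - B *ᵥ (B *ᵥ (B *ᵥ w)) := by
                rw [mulVec_sub, mulVec_sub, mulVec_sub]
              rw [hsub3] at IH'
              have e1 : y ⟨c, hcm⟩ = 0 ↔ ¬ ((y - w) ⟨c, hcm⟩ = 0) := by
                have : (y - w) ⟨c, hcm⟩ = y ⟨c, hcm⟩ - w ⟨c, hcm⟩ := rfl
                rw [this]
                exact zm2_iff _ hwcoord
              have e2 : (B *ᵥ (B *ᵥ (B *ᵥ y))) ⟨c, hcm⟩ = 0 ↔
                  ¬ ((B *ᵥ (B *ᵥ (B *ᵥ y)) - B *ᵥ (B *ᵥ (B *ᵥ w))) ⟨c, hcm⟩ = 0) := by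
                have : (B *ᵥ (B *ᵥ (B *ᵥ y)) - B *ᵥ (B *ᵥ (B *ᵥ w))) ⟨c, hcm⟩
                    = (B *ᵥ (B *ᵥ (B *ᵥ y))) ⟨c, hcm⟩ - (B *ᵥ (B *ᵥ (B *ᵥ w))) ⟨c, hcm⟩ := rfl
                rw [this]
                exact zm2_iff _ hT3wc
              rw [e1, e2, IH']
      constructor
      · intro hx
        have hVc : VP m c x := fun i hi => hx i (by omega)
        have hkey := key m x hVc (by
          intro i hi; exact absurd hi (by omega))
        have hc0 : x ⟨c, hcm⟩ = 0 := hx ⟨c, hcm⟩ (by simp)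
        have hT3 : VP m c (B *ᵥ (B *ᵥ (B *ᵥ x))) := (IH x).mp hVc
        exact VPsucc hT3 hcm (hkey.mp hc0)
      · intro hx
        have hVcT : VP m c (B *ᵥ (B *ᵥ (B *ᵥ x))) := fun i hi => hx i (by omega)
        have hVc : VP m c x := (IH x).mpr hVcT
        have hkey := key m x hVc (by
          intro i hi; exact absurd hi (by omega))
        have hc0 : (B *ᵥ (B *ᵥ (B *ᵥ x))) ⟨c, hcm⟩ = 0 := hx ⟨c, hcm⟩ (by simp)
        exact VPsucc hVc hcm (hkey.mpr hc0)

include hz in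
lemma fix3 (a b c : ℕ) (h : a + b + c + 1 = m) (x : Fin m → ZMod 2)
    (hxa : VP m a x) (hxb : VP m b (B *ᵥ x)) (hxc : VP m c (B *ᵥ (B *ᵥ x))) :
    B *ᵥ (B *ᵥ (B *ᵥ x)) = x := by
  by_cases hx0 : x = 0
  · rw [hx0]; simp [Matrix.mulVec_zero]
  · have ha : a < m := by omega
    have hTa : VP m a (B *ᵥ (B *ᵥ (B *ᵥ x))) := (flagiff hz a x).mp hxa
    have hTb : VP m b (B *ᵥ (B *ᵥ (B *ᵥ (B *ᵥ x)))) := (flagiff hz b (B *ᵥ x)).mp hxb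
    have hTc : VP m c (B *ᵥ (B *ᵥ (B *ᵥ (B *ᵥ (B *ᵥ x))))) := (flagiff hz c (B *ᵥ (B *ᵥ x))).mp hxc
    have hxa1 : x ⟨a, ha⟩ ≠ 0 := by
      intro hcoord
      exact hx0 (hz (a+1) b c (by omega) x (VPsucc hxa ha hcoord) hxb hxc)
    have hT30 : B *ᵥ (B *ᵥ (B *ᵥ x)) ≠ 0 := by
      intro h3
      exact hx0 (hinj hz x (hinj hz _ (hinj hz _ h3)))
    have hTa1 : (B *ᵥ (B *ᵥ (B *ᵥ x))) ⟨a, ha⟩ ≠ 0 := by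
      intro hcoord
      exact hT30 (hz (a+1) b c (by omega) _ (VPsucc hTa ha hcoord) hTb hTc)
    have hy : B *ᵥ (B *ᵥ (B *ᵥ x)) - x = 0 := by
      refine hz (a+1) b c (by omega) _ ?_ ?_ ?_
      · refine VPsucc (fun i hi => ?_) ha ?_
        · rw [Pi.sub_apply, hTa i hi, hxa i hi, sub_self]
        · exact zm2_sub hTa1 hxa1
      · rw [mulVec_sub]
        intro i hi
        rw [Pi.sub_apply, hTb i hi, hxb i hi, sub_self]
      · rw [mulVec_sub, mulVec_sub]
        intro i hi
        rw [Pi.sub_apply, hTc i hi, hxc i hi, sub_self]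
    exact sub_eq_zero.mp hy

include hz in
lemma allfix : ∀ x : Fin m → ZMod 2, B *ᵥ (B *ᵥ (B *ᵥ x)) = x := by
  have claim : ∀ k : ℕ, ∀ x : Fin m → ZMod 2, VP m (m - k) x → B *ᵥ (B *ᵥ (B *ᵥ x)) = x := by
    intro k
    induction k with
    | zero =>
      intro x hx
      have : x = 0 := funext fun i => hx i (by simpa using i.isLt)
      rw [this]; simp [Matrix.mulVec_zero]
    | succ k IHk =>
      intro x hx
      by_cases hk : k < m
      case neg =>
        apply IHk x
        intro i hi; exact absurd hi (by omega)
      case pos =>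
        set a := m - (k+1) with hadef
        have ha : a < m := by omega
        by_cases h0 : x ⟨a, ha⟩ = 0
        · apply IHk x
          have hVa : VP m a x := fun i hi => hx i (by omega)
          have : m - k = a + 1 := by omega
          rw [this]
          exact VPsucc hVa ha h0
        · obtain ⟨u, hu0, hua, hub, huc⟩ := Sex (B := B) a (m - 1 - a) 0 (by omega)
          have hufix : B *ᵥ (B *ᵥ (B *ᵥ u)) = u := fix3 hz a (m - 1 - a) 0 (by omega) u hua hub huc
          have hucoord : u ⟨a, ha⟩ ≠ 0 := by
            intro h
            exact hu0 (hz (a+1) (m - 1 - a) 0 (by omega) u (VPsucc hua ha h) hub huc)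
          have hVx' : VP m (m - k) (x - u) := by
            intro i hi
            by_cases hia : (i : ℕ) < a
            · rw [Pi.sub_apply, hx i (by omega), hua i hia, sub_self]
            · have : i = ⟨a, ha⟩ := by apply Fin.ext; show (i : ℕ) = a; omega
              rw [this]
              exact zm2_sub h0 hucoord
          have IH' := IHk (x - u) hVx'
          rw [mulVec_sub, mulVec_sub, mulVec_sub, hufix, sub_eq_iff_eq_add] at IH'
          rw [IH']
          abel
  intro x
  apply claim m x
  intro i hi; exact absurd hi (by omega)

end part2



lemma phi_nonneg (m : ℕ) (y : Fin m → ZMod 2) : 0 ≤ phiMap m y := by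
  apply Finset.sum_nonneg
  intro k _
  positivity

lemma geo_sum (d : ℕ) : ∀ m : ℕ, d ≤ m →
    ∑ k ∈ Finset.Ico d m, ((1:ℝ)/2) ^ (k+1) = (1/2) ^ d - (1/2) ^ m := by
  intro m
  induction m with
  | zero => intro h; interval_cases d; simp
  | succ n IH =>
    intro h
    by_cases hd : d ≤ n
    · rw [Finset.sum_Ico_succ_top hd, IH hd]
      ring
    · have : d = n + 1 := by omega
      subst this
      simp
lemma phi_lt (m d : ℕ) (hd : d ≤ m) (y : Fin m → ZMod 2)
    (h : ∀ i : Fin m, (i : ℕ) < d → y i = 0) : phiMap m y < 1 / 2 ^ d := by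
  classical
  set g : ℕ → ℝ := fun n => if hn : n < m then ((y ⟨n, hn⟩).val : ℝ) / 2 ^ (n+1) else 0 with hg
  have hphi : phiMap m y = ∑ k ∈ Finset.range m, g k := by
    rw [phiMap, ← Fin.sum_univ_eq_sum_range]
    apply Finset.sum_congr rfl
    intro k _
    rw [hg]
    simp only [k.isLt, dif_pos]
  have hsub : ∑ k ∈ Finset.range m, g k = ∑ k ∈ Finset.Ico d m, g k := by
    rw [Finset.range_eq_Ico]
    symm
    apply Finset.sum_subset (Finset.Ico_subset_Ico (Nat.zero_le d) le_rfl)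
    intro k hk hk2
    simp only [Finset.mem_Ico] at hk hk2
    have hkm : k < m := hk.2
    have hkd : k < d := by omega
    rw [hg]
    simp only [hkm, dif_pos]
    rw [h ⟨k, hkm⟩ hkd]
    simp
  have hle : ∑ k ∈ Finset.Ico d m, g k ≤ ∑ k ∈ Finset.Ico d m, ((1:ℝ)/2) ^ (k+1) := by
    apply Finset.sum_le_sum
    intro k hk
    simp only [Finset.mem_Ico] at hk
    rw [hg]
    simp only [hk.2, dif_pos]
    rw [div_pow, one_pow]
    have hval : ((y ⟨k, hk.2⟩).val : ℝ) ≤ 1 := by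
      have := ZMod.val_lt (y ⟨k, hk.2⟩)
      exact_mod_cast Nat.lt_succ_iff.mp (by omega)
    gcongr
  have hgeo := geo_sum d m hd
  have hpow : ((1:ℝ)/2) ^ d = 1 / 2 ^ d := by rw [div_pow, one_pow]
  have hpos : (0:ℝ) < (1/2) ^ m := by positivity
  calc phiMap m y = ∑ k ∈ Finset.Ico d m, g k := by rw [hphi, hsub]
    _ ≤ (1/2) ^ d - (1/2) ^ m := by rw [← hgeo]; exact hle
    _ < (1/2) ^ d := by linarith
    _ = 1 / 2 ^ d := hpow




lemma digits_surj (m : ℕ) (x : Fin m → ZMod 2) : ∃ l, l < 2 ^ m ∧ digitsVec m l = x := by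
  classical
  have hinj : Set.InjOn (digitsVec m) (Finset.range (2 ^ m)) := by
    intro l1 h1 l2 h2 heq
    simp only [Finset.coe_range, Set.mem_Iio] at h1 h2
    apply Nat.eq_of_testBit_eq
    intro k
    by_cases hk : k < m
    · have := congrFun heq ⟨k, hk⟩
      simp only [digitsVec] at this
      by_cases hb1 : l1.testBit k <;> by_cases hb2 : l2.testBit k <;>
          first
          | (exfalso; rw [if_pos hb1, if_neg hb2] at this; exact one_ne_zero this)
          | (exfalso; rw [if_neg hb1, if_pos hb2] at this; exact one_ne_zero this.symm)
          | simp [hb1, hb2]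
    · have e1 : l1.testBit k = false := Nat.testBit_lt_two_pow (lt_of_lt_of_le h1 (Nat.pow_le_pow_right (by norm_num) (by omega)))
      have e2 : l2.testBit k = false := Nat.testBit_lt_two_pow (lt_of_lt_of_le h2 (Nat.pow_le_pow_right (by norm_num) (by omega)))
      rw [e1, e2]
  have hcard : ((Finset.range (2 ^ m)).image (digitsVec m)).card = Fintype.card (Fin m → ZMod 2) := by
    rw [Finset.card_image_of_injOn hinj, Finset.card_range]
    simp [Fintype.card_fun, ZMod.card]
  have huniv := Finset.eq_univ_of_card _ hcard
  have hx : x ∈ (Finset.range (2 ^ m)).image (digitsVec m) := by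
    rw [huniv]; exact Finset.mem_univ x
  obtain ⟨l, hl, hlx⟩ := Finset.mem_image.mp hx
  exact ⟨l, Finset.mem_range.mp hl, hlx⟩

lemma countP_unique {α : Type*} (p : α → Prop) [DecidablePred p] {s : Multiset α}
    (hc : s.countP p = 1) {u v : α} (hu : u ∈ s) (hv : v ∈ s) (hpu : p u) (hpv : p v) : u = v := by
  by_contra hne
  rw [Multiset.countP_eq_card_filter] at hc
  have h1 : u ∈ s.filter p := Multiset.mem_filter.mpr ⟨hu, hpu⟩
  obtain ⟨t, ht⟩ := Multiset.exists_cons_of_mem h1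
  have h2 : v ∈ s.filter p := Multiset.mem_filter.mpr ⟨hv, hpv⟩
  rw [ht] at h2 hc
  have h3 : v ∈ t := by
    rcases Multiset.mem_cons.mp h2 with h | h
    · exact absurd h.symm hne
    · exact h
  rw [Multiset.card_cons] at hc
  have := Multiset.card_pos_iff_exists_mem.mpr ⟨v, h3⟩
  omega

lemma digitsVec_zero (m : ℕ) : digitsVec m 0 = 0 := by
  funext k
  simp [digitsVec, Nat.zero_testBit]

lemma netZ (m : ℕ) (B : Matrix (Fin m) (Fin m) (ZMod 2))
    (hnet : IsNet 0 m 3 (digitalNet m 3 ![1, B, B ^ 2])) :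
    ∀ a b c : ℕ, a + b + c = m → ∀ x : Fin m → ZMod 2,
      VP m a x → VP m b (B *ᵥ x) → VP m c (B *ᵥ (B *ᵥ x)) → x = 0 := by
  classical
  intro a b c hsum x hx1 hx2 hx3
  obtain ⟨l, hl, hdl⟩ := digits_surj m x
  have hdsum : (∑ i, (![a, b, c] : Fin 3 → ℕ) i) = m - 0 := by
    rw [Fin.sum_univ_three]
    show a + b + c = m - 0
    omega
  have hible : ∀ i : Fin 3, (fun _ : Fin 3 => 0) i < 2 ^ (![a, b, c] : Fin 3 → ℕ) i :=
    fun i => Nat.pow_pos (by norm_num)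
  have hc := hnet ![a, b, c] hdsum (fun _ => 0) hible
  rw [pow_zero] at hc
  simp only [digitalNet, Multiset.countP_map, ← Multiset.countP_eq_card_filter,
    Nat.cast_zero, zero_div, zero_add] at hc
  have hl0 : l = 0 := by
    refine countP_unique _ hc (Multiset.mem_range.mpr hl)
      (Multiset.mem_range.mpr (Nat.pow_pos (by norm_num))) ?_ ?_
    · intro i
      fin_cases i
      · refine ⟨phi_nonneg _ _, ?_⟩
        show phiMap m ((1 : Matrix (Fin m) (Fin m) (ZMod 2)) *ᵥ digitsVec m l) < 1 / 2 ^ a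
        rw [hdl, one_mulVec]
        exact phi_lt m a (by omega) x hx1
      · refine ⟨phi_nonneg _ _, ?_⟩
        show phiMap m (B *ᵥ digitsVec m l) < 1 / 2 ^ b
        rw [hdl]
        exact phi_lt m b (by omega) _ hx2
      · refine ⟨phi_nonneg _ _, ?_⟩
        show phiMap m ((B ^ 2) *ᵥ digitsVec m l) < 1 / 2 ^ c
        rw [hdl, pow_two, ← Matrix.mulVec_mulVec]
        exact phi_lt m c (by omega) _ hx3
    · intro i
      have hphiz : ∀ M : Matrix (Fin m) (Fin m) (ZMod 2), phiMap m (M *ᵥ digitsVec m 0) = 0 := by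
        intro M
        rw [digitsVec_zero, Matrix.mulVec_zero]
        simp [phiMap]
      fin_cases i
      · exact ⟨le_of_eq (hphiz _).symm, by rw [hphiz]; positivity⟩
      · exact ⟨le_of_eq (hphiz _).symm, by rw [hphiz]; positivity⟩
      · exact ⟨le_of_eq (hphiz _).symm, by rw [hphiz]; positivity⟩
  rw [hl0, digitsVec_zero] at hdl
  exact hdl.symm

theorem stmt1 (m : ℕ) (hm : 1 ≤ m) (B : Matrix (Fin m) (Fin m) (ZMod 2))
    (hnet : IsNet 0 m 3 (digitalNet m 3 ![1, B, B ^ 2])) :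
    B ^ 3 = 1 := by
  have hz := netZ m B hnet
  have hfix := allfix hz
  ext i j
  have h := hfix (fun k => if k = j then 1 else 0)
  have hp3 : B ^ 3 = B * (B * B) := by rw [pow_succ, pow_two, mul_assoc]
  have h3 : (B ^ 3) *ᵥ (fun k => if k = j then 1 else 0) = fun k => if k = j then 1 else 0 := by
    rw [hp3, ← Matrix.mulVec_mulVec, ← Matrix.mulVec_mulVec]
    exact h
  have hij := congrFun h3 i
  simp only [Matrix.mulVec, dotProduct, mul_ite, mul_one, mul_zero,
    Finset.sum_ite_eq', Finset.mem_univ, if_true] at hij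
  rw [Matrix.one_apply, hij]
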